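/- arXiv:1806.03868 — 7 statements merged into one kernel-verified Lean document; each statement's English description precedes it below -/
import Mathlib

section
/- Let V be an m-ordered polynomial stochastic operator. Then V is surjective on B_1^+ (the set of nonnegative summable sequences with sum ≤ 1) if and only if V is surjective on the simplex S (nonnegative sequences with sum = 1). -/
/-- The m-ordered polynomial operator associated to a hypermatrix `P`. -/
noncomputable def psoV (m : ℕ) (P : (Fin m → ℕ) → ℕ → ℝ) (x : ℕ → ℝ) (k : ℕ) : ℝ :=
  ∑' i : Fin m → ℕ, P i k * ∏ j, x (i j)

/-- The hypermatrix is stochastic. -/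
def IsStochastic (m : ℕ) (P : (Fin m → ℕ) → ℕ → ℝ) : Prop :=
  (∀ i k, 0 ≤ P i k) ∧ ∀ i, HasSum (fun k => P i k) 1

/-- symmetry of the hypermatrix in its first m indices. -/
def HypSymm (m : ℕ) (P : (Fin m → ℕ) → ℕ → ℝ) : Prop :=
  ∀ (σ : Equiv.Perm (Fin m)) (i : Fin m → ℕ) (k : ℕ), P (i ∘ σ) k = P i k

/-- membership in the infinite-dimensional simplex S. -/
def inS (x : ℕ → ℝ) : Prop := (∀ i, 0 ≤ x i) ∧ HasSum x 1

/-- the standard basis vector e_i. -/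
def stdBasis (i : ℕ) : ℕ → ℝ := fun n => if n = i then 1 else 0

/-- x and y are orthogonal: disjoint supports. -/
def Orth (x y : ℕ → ℝ) : Prop := ∀ k, x k * y k = 0

/-- V is orthogonal preserving on S. -/
def IsOP (m : ℕ) (P : (Fin m → ℕ) → ℕ → ℝ) : Prop :=
  ∀ x y : ℕ → ℝ, inS x → inS y → Orth x y → Orth (psoV m P x) (psoV m P y)

/-- V is surjective on S. -/
def SurjOnS (m : ℕ) (P : (Fin m → ℕ) → ℕ → ℝ) : Prop :=
  ∀ y : ℕ → ℝ, inS y → ∃ x : ℕ → ℝ, inS x ∧ psoV m P x = y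

/-- membership in B_1^+. -/
def inB (x : ℕ → ℝ) : Prop := (∀ i, 0 ≤ x i) ∧ ∃ r : ℝ, r ≤ 1 ∧ HasSum x r

set_option maxHeartbeats 800000 in
lemma hasSum_pi_prod {x : ℕ → ℝ} (hx : ∀ i, 0 ≤ x i) {r : ℝ} (h : HasSum x r)
    (m : ℕ) : HasSum (fun i : Fin m → ℕ => ∏ j, x (i j)) (r ^ m) := by
  induction m with
  | zero =>
      simpa using hasSum_single (f := fun i : Fin 0 → ℕ => ∏ j, x (i j)) (default)
        (by intro b hb; exact absurd (Subsingleton.elim b default) hb)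
  | succ n ih =>
      have hs : Summable fun p : ℕ × (Fin n → ℕ) => x p.1 * ∏ j, x (p.2 j) := by
        apply Summable.mul_of_nonneg h.summable ih.summable
        · exact hx
        · exact fun i => Finset.prod_nonneg fun j _ => hx _
      have hmul := h.mul ih hs
      have key : HasSum ((fun i : Fin (n+1) → ℕ => ∏ j, x (i j)) ∘
          (Fin.consEquiv fun _ => ℕ)) (r ^ (n+1)) := by
        have heq : ((fun i : Fin (n+1) → ℕ => ∏ j, x (i j)) ∘ (Fin.consEquiv fun _ => ℕ))
            = fun p : ℕ × (Fin n → ℕ) => x p.1 * ∏ j, x (p.2 j) := by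
          funext p
          simp [Fin.consEquiv, Fin.prod_univ_succ]
        rw [heq, pow_succ, mul_comm]
        exact hmul
      exact ((Fin.consEquiv fun _ => ℕ).hasSum_iff).1 key

set_option maxHeartbeats 800000 in
lemma hasSum_psoV (m : ℕ) (P : (Fin m → ℕ) → ℕ → ℝ) (hP : IsStochastic m P)
    {x : ℕ → ℝ} {r : ℝ} (hx : ∀ i, 0 ≤ x i) (h : HasSum x r) :
    HasSum (psoV m P x) (r ^ m) := by
  set F : (Fin m → ℕ) × ℕ → ℝ := fun p => P p.1 p.2 * ∏ j, x (p.1 j) with hF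
  have hFnn : 0 ≤ F := by
    intro p
    exact mul_nonneg (hP.1 _ _) (Finset.prod_nonneg fun j _ => hx _)
  have hfiber : ∀ i, HasSum (fun k => F (i, k)) (∏ j, x (i j)) := by
    intro i
    simpa [hF, mul_comm] using (hP.2 i).mul_left (∏ j, x (i j))
  have hg : HasSum (fun i : Fin m → ℕ => ∏ j, x (i j)) (r ^ m) := hasSum_pi_prod hx h m
  have hsumF : Summable F := by
    rw [summable_prod_of_nonneg hFnn]
    refine ⟨fun i => (hfiber i).summable, ?_⟩
    have heq : (fun i : Fin m → ℕ => ∑' k, F (i, k)) = fun i => ∏ j, x (i j) := by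
      funext i; exact (hfiber i).tsum_eq
    rw [heq]; exact hg.summable
  have hFs : HasSum F (r ^ m) := by
    obtain ⟨a, ha⟩ := hsumF
    have h1 : HasSum (fun i : Fin m → ℕ => ∏ j, x (i j)) a :=
      ha.prod_fiberwise hfiber
    rwa [h1.unique hg] at ha
  have hFs' : HasSum (fun p : ℕ × (Fin m → ℕ) => F (p.2, p.1)) (r ^ m) := by
    exact ((Equiv.prodComm ℕ (Fin m → ℕ)).hasSum_iff (f := F)).2 hFs
  refine hFs'.prod_fiberwise fun k => ?_
  have hsk : Summable fun i : Fin m → ℕ => F (i, k) := hFs'.summable.prod_factor k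
  simpa [psoV, hF] using hsk.hasSum

set_option maxHeartbeats 800000 in
theorem stmt1 (m : ℕ) (hm : 1 ≤ m) (P : (Fin m → ℕ) → ℕ → ℝ)
    (hP : IsStochastic m P) :
    (∀ y : ℕ → ℝ, inB y → ∃ x : ℕ → ℝ, inB x ∧ psoV m P x = y) ↔ SurjOnS m P := by
  constructor
  · intro hB y hy
    obtain ⟨x, ⟨hxnn, r, hr1, hxr⟩, hVx⟩ := hB y ⟨hy.1, 1, le_refl 1, hy.2⟩
    have hr0 : 0 ≤ r := hxr.nonneg hxnn
    have hV : HasSum (psoV m P x) (r ^ m) := hasSum_psoV m P hP hxnn hxr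
    have h1 : r ^ m = 1 := hV.unique (hVx ▸ hy.2)
    have hr : r = 1 := by
      by_contra hne
      have hlt : r < 1 := lt_of_le_of_ne hr1 hne
      have : r ^ m < 1 := pow_lt_one₀ hr0 hlt (by omega)
      linarith
    exact ⟨x, ⟨hxnn, hr ▸ hxr⟩, hVx⟩
  · intro hS y hyB
    obtain ⟨hynn, r, hr1, hyr⟩ := hyB
    have hr0 : 0 ≤ r := hyr.nonneg hynn
    rcases eq_or_lt_of_le hr0 with hr0' | hrpos
    · have hy0 : y = 0 := by
        funext n
        have h1 := le_hasSum hyr n (fun i _ => hynn i)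
        have h2 := hynn n
        rw [← hr0'] at h1
        simpa using le_antisymm h1 h2
      refine ⟨0, ⟨fun i => le_refl 0, 0, by norm_num, by exact (hasSum_zero : HasSum (fun _ : ℕ => (0:ℝ)) 0)⟩, ?_⟩
      funext k
      rw [hy0]
      simp only [psoV, Pi.zero_apply, Finset.prod_const, Finset.card_univ, Fintype.card_fin,
        zero_pow (Nat.one_le_iff_ne_zero.1 hm), mul_zero, tsum_zero]
    · set y' : ℕ → ℝ := fun n => y n / r with hy'
      have hy'S : inS y' := ⟨fun n => div_nonneg (hynn n) hr0, by
        simpa [hy', div_self (ne_of_gt hrpos)] using hyr.div_const r⟩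
      obtain ⟨x', hx'S, hVx'⟩ := hS y' hy'S
      set s : ℝ := r ^ ((1:ℝ)/m) with hs
      have hs0 : 0 ≤ s := Real.rpow_nonneg hr0 _
      have hsm : s ^ m = r := by
        rw [hs, ← Real.rpow_natCast (r ^ ((1:ℝ)/m)) m, ← Real.rpow_mul hr0]
        rw [one_div, inv_mul_cancel₀ (by positivity : (m:ℝ) ≠ 0)]
        exact Real.rpow_one r
      refine ⟨fun n => s * x' n, ⟨fun n => mul_nonneg hs0 (hx'S.1 n),
        s, Real.rpow_le_one hr0 hr1 (by positivity), by simpa using hx'S.2.mul_left s⟩, ?_⟩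
      funext k
      have hprod : ∀ i : Fin m → ℕ, (∏ j, s * x' (i j)) = s ^ m * ∏ j, x' (i j) := by
        intro i
        rw [Finset.prod_mul_distrib, Finset.prod_const]
        simp
      calc psoV m P (fun n => s * x' n) k
          = ∑' i : Fin m → ℕ, s ^ m * (P i k * ∏ j, x' (i j)) := by
            unfold psoV; congr 1; funext i; rw [hprod i]; ring
        _ = s ^ m * psoV m P x' k := tsum_mul_left
        _ = y k := by
            rw [hVx', hsm, hy']
            field_simp
end

section
/- Let V be an m-ordered PSO on the infinite simplex S such that V(e_i) = e_i for all i ∈ ℕ. If V is orthogonal preserving, then for all indices i_1,...,i_m, k ∈ ℕ with k ∉ {i_1,...,i_m}, one has P_{i_1...i_m,k} = 0. -/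
theorem stmt2 (m : ℕ) (hm : 1 ≤ m) (P : (Fin m → ℕ) → ℕ → ℝ)
    (hP : IsStochastic m P) (hsym : HypSymm m P)
    (hfix : ∀ i : ℕ, psoV m P (stdBasis i) = stdBasis i)
    (hop : IsOP m P) :
    ∀ (i : Fin m → ℕ) (k : ℕ), (∀ j, i j ≠ k) → P i k = 0 := by
  intro i k hik
  obtain ⟨hPnn, hPsum⟩ := hP
  set A : Finset ℕ := Finset.image i Finset.univ with hA
  have hAne : A.Nonempty := ⟨i ⟨0, hm⟩, Finset.mem_image_of_mem i (Finset.mem_univ _)⟩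
  have hcard : 0 < (A.card : ℝ) := by exact_mod_cast Finset.card_pos.mpr hAne
  set x : ℕ → ℝ := fun n => if n ∈ A then (A.card : ℝ)⁻¹ else 0 with hxdef
  have hxnn : ∀ n, 0 ≤ x n := by
    intro n
    simp only [hxdef]
    split
    · positivity
    · exact le_refl 0
  have hsumval : ∑ b ∈ A, x b = 1 := by
    have : ∀ b ∈ A, x b = (A.card : ℝ)⁻¹ := by
      intro b hb; simp [hxdef, hb]
    rw [Finset.sum_congr rfl this, Finset.sum_const, nsmul_eq_mul]
    field_simp
  have hxs : HasSum x 1 := by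
    have h := hasSum_sum_of_ne_finset_zero (s := A) (f := x) (L := SummationFilter.unconditional ℕ)
      (by intro b hb; simp [hxdef, hb])
    rwa [hsumval] at h
  have hxS : inS x := ⟨hxnn, hxs⟩
  have hkS : inS (stdBasis k) := by
    constructor
    · intro n; simp only [stdBasis]; split <;> norm_num
    · exact hasSum_ite_eq k 1
  have hkA : k ∉ A := by
    simp only [hA, Finset.mem_image, Finset.mem_univ, true_and]
    rintro ⟨j, hj⟩
    exact hik j hj
  have horth : Orth x (stdBasis k) := by
    intro n
    by_cases hn : n = k
    · subst hn; simp [hxdef, hkA]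
    · simp [stdBasis, hn]
  have h0 : psoV m P x k = 0 := by
    have h := hop x (stdBasis k) hxS hkS horth k
    rw [hfix k] at h
    simpa [stdBasis] using h
  set f : (Fin m → ℕ) → ℝ := fun t => P t k * ∏ j, x (t j) with hf
  have hfnn : ∀ t, 0 ≤ f t :=
    fun t => mul_nonneg (hPnn t k) (Finset.prod_nonneg fun j _ => hxnn _)
  have hsupp : ∀ t ∉ Fintype.piFinset (fun _ : Fin m => A), f t = 0 := by
    intro t ht
    rw [Fintype.mem_piFinset] at ht
    push_neg at ht
    obtain ⟨j, hj⟩ := ht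
    have hx0 : x (t j) = 0 := by simp [hxdef, hj]
    have hz : ∏ j, x (t j) = 0 :=
      Finset.prod_eq_zero (f := fun j => x (t j)) (Finset.mem_univ j) hx0
    simp [hf, hz]
  have hsum : Summable f := summable_of_ne_finset_zero hsupp
  have hle : f i ≤ ∑' t, f t := Summable.le_tsum hsum i fun t _ => hfnn t
  have htsum : ∑' t, f t = 0 := h0
  have hfi : f i = 0 := le_antisymm (htsum ▸ hle) (hfnn i)
  have hprod : 0 < ∏ j, x (i j) := by
    apply Finset.prod_pos
    intro j _
    have : i j ∈ A := Finset.mem_image_of_mem i (Finset.mem_univ j)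
    simp only [hxdef, this, if_true]
    positivity
  have := mul_eq_zero.mp hfi
  rcases this with h | h
  · exact h
  · exact absurd h (ne_of_gt hprod)
end

section
/- Let V be an m-ordered PSO with V(e_i) = e_i for all i ∈ ℕ. If P_{i_1...i_m,k} = 0 whenever k ∉ {i_1,...,i_m}, then V is orthogonal preserving, i.e., x ⊥ y implies V(x) ⊥ V(y) for all x, y ∈ S. -/
theorem stmt3 (m : ℕ) (hm : 1 ≤ m) (P : (Fin m → ℕ) → ℕ → ℝ)
    (hP : IsStochastic m P) (hsym : HypSymm m P)
    (hfix : ∀ i : ℕ, psoV m P (stdBasis i) = stdBasis i)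
    (hzero : ∀ (i : Fin m → ℕ) (k : ℕ), (∀ j, i j ≠ k) → P i k = 0) :
    IsOP m P := by
  have key : ∀ z : ℕ → ℝ, ∀ k, z k = 0 → psoV m P z k = 0 := by
    intro z k hz
    unfold psoV
    rw [show (fun i : Fin m → ℕ => P i k * ∏ j, z (i j)) = fun _ => 0 from ?_, tsum_zero]
    funext i
    by_cases hPik : P i k = 0
    · simp [hPik]
    · have : ¬ (∀ j, i j ≠ k) := fun h => hPik (hzero i k h)
      push_neg at this
      obtain ⟨j, hj⟩ := this
      have : (∏ j, z (i j)) = 0 :=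
        Finset.prod_eq_zero (Finset.mem_univ j) (by rw [hj]; exact hz)
      simp [this]
  intro x y hx hy hxy k
  rcases mul_eq_zero.mp (hxy k) with h | h
  · rw [key x k h, zero_mul]
  · rw [key y k h, mul_zero]
end

section
/- Let V be a surjective m-ordered PSO on the infinite-dimensional simplex S. Then for every k ∈ ℕ there exists j_k ∈ ℕ such that P_{j_k j_k ... j_k, k} = 1 (the diagonal entry with all first m indices equal to j_k). -/
lemma hasSum_prod_pi (m : ℕ) (x : ℕ → ℝ) (hx : inS x) :
    HasSum (fun i : Fin m → ℕ => ∏ j, x (i j)) 1 := by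
  induction m with
  | zero =>
      have h1 : (fun i : Fin 0 → ℕ => ∏ j, x (i j)) = fun i => if i = default then 1 else 0 := by
        funext i; simp [Subsingleton.elim i default]
      rw [h1]
      exact hasSum_ite_eq (default : Fin 0 → ℕ) (1 : ℝ)
  | succ n ih =>
      have hxn : Summable fun k => ‖x k‖ := by
        have := hx.2.summable
        simpa [Real.norm_eq_abs, abs_of_nonneg (hx.1 _)] using this
      have hgn : Summable fun i : Fin n → ℕ => ‖∏ j, x (i j)‖ := by
        refine ih.summable.congr fun i => ?_
        rw [Real.norm_eq_abs, abs_of_nonneg (Finset.prod_nonneg fun j _ => hx.1 _)]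
      have hmul : HasSum (fun p : ℕ × (Fin n → ℕ) => x p.1 * ∏ j, x (p.2 j)) 1 := by
        have := hx.2.mul ih (Summable.mul_norm hxn hgn).of_norm
        simpa using this
      have hcomp : ((fun i : Fin (n+1) → ℕ => ∏ j, x (i j)) ∘ (Fin.consEquiv fun _ => ℕ)) =
          fun p : ℕ × (Fin n → ℕ) => x p.1 * ∏ j, x (p.2 j) := by
        funext p
        simp only [Function.comp_apply, Fin.consEquiv_apply, Fin.prod_univ_succ,
          Fin.cons_zero, Fin.cons_succ]
      exact (Fin.consEquiv fun _ => ℕ).hasSum_iff.mp (by rw [hcomp]; exact hmul)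

theorem stmt8 (m : ℕ) (hm : 1 ≤ m) (P : (Fin m → ℕ) → ℕ → ℝ)
    (hP : IsStochastic m P) (hsur : SurjOnS m P) :
    ∀ k : ℕ, ∃ j : ℕ, P (fun _ => j) k = 1 := by
  intro k
  have hy : inS (stdBasis k) := by
    constructor
    · intro n; unfold stdBasis; split <;> norm_num
    · exact hasSum_ite_eq k (1 : ℝ)
  obtain ⟨x, hx, hVx⟩ := hsur (stdBasis k) hy
  have hg : HasSum (fun i : Fin m → ℕ => ∏ j, x (i j)) 1 := hasSum_prod_pi m x hx
  have hgnn : ∀ i : Fin m → ℕ, 0 ≤ ∏ j, x (i j) :=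
    fun i => Finset.prod_nonneg fun j _ => hx.1 _
  have hPle : ∀ i, P i k ≤ 1 := fun i => le_hasSum (hP.2 i) k (fun n _ => hP.1 i n)
  have hfnn : ∀ i : Fin m → ℕ, 0 ≤ P i k * ∏ j, x (i j) :=
    fun i => mul_nonneg (hP.1 i k) (hgnn i)
  have hfle : ∀ i : Fin m → ℕ, P i k * ∏ j, x (i j) ≤ ∏ j, x (i j) :=
    fun i => mul_le_of_le_one_left (hgnn i) (hPle i)
  have hsumf : Summable (fun i : Fin m → ℕ => P i k * ∏ j, x (i j)) :=
    Summable.of_nonneg_of_le hfnn hfle hg.summable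
  have hfsum : (∑' i : Fin m → ℕ, P i k * ∏ j, x (i j)) = 1 := by
    have := congrFun hVx k
    simpa [psoV, stdBasis] using this
  obtain ⟨j, hj⟩ : ∃ j, x j ≠ 0 := by
    by_contra h
    push_neg at h
    have h0 : HasSum x 0 := by
      have : x = fun _ => (0 : ℝ) := funext h
      rw [this]; exact hasSum_zero
    exact one_ne_zero (hx.2.unique h0)
  have hjpos : 0 < x j := lt_of_le_of_ne (hx.1 j) (Ne.symm hj)
  refine ⟨j, ?_⟩
  by_contra hne
  have hlt : P (fun _ => j) k < 1 := lt_of_le_of_ne (hPle _) hne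
  have hgpos : 0 < ∏ _j : Fin m, x j := Finset.prod_pos fun _ _ => hjpos
  have hstrict : P (fun _ => j) k * ∏ _j : Fin m, x j < ∏ _j : Fin m, x j :=
    mul_lt_of_lt_one_left hgpos hlt
  have := Summable.tsum_lt_tsum hfle hstrict hsumf hg.summable
  rw [hfsum, hg.tsum_eq] at this
  exact lt_irrefl _ this
end

section
/- Let V be a surjective m-ordered PSO on S with V(e_i) = e_i for all i ∈ ℕ. Then V^{-1}(e_i) = {e_i} for every i ∈ ℕ, i.e., the only preimage of each vertex is the vertex itself. -/
lemma aux_sum_prod_le {m : ℕ} {x : ℕ → ℝ} (hx : inS x) (s : Finset (Fin m → ℕ)) :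
    ∑ f ∈ s, ∏ j, x (f j) ≤ 1 := by
  classical
  set t : Finset ℕ := s.sup (fun f => Finset.image f Finset.univ) with ht
  have hsub : s ⊆ Fintype.piFinset (fun _ : Fin m => t) := by
    intro f hf
    simp only [Fintype.mem_piFinset]
    intro j
    exact Finset.le_sup (f := fun f => Finset.image f Finset.univ) hf
      (Finset.mem_image.2 ⟨j, Finset.mem_univ j, rfl⟩)
  calc ∑ f ∈ s, ∏ j, x (f j)
      ≤ ∑ f ∈ Fintype.piFinset (fun _ : Fin m => t), ∏ j, x (f j) := by
        apply Finset.sum_le_sum_of_subset_of_nonneg hsub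
        intro f _ _
        exact Finset.prod_nonneg fun j _ => hx.1 _
    _ = ∏ _j : Fin m, ∑ n ∈ t, x n := (Finset.prod_univ_sum _ _).symm
    _ = (∑ n ∈ t, x n) ^ m := by
        rw [Finset.prod_const, Finset.card_univ, Fintype.card_fin]
    _ ≤ 1 ^ m := by
        apply pow_le_pow_left₀ (Finset.sum_nonneg fun n _ => hx.1 n)
        exact sum_le_hasSum t (fun n _ => hx.1 n) hx.2
    _ = 1 := one_pow m

lemma aux_summable {m : ℕ} {P : (Fin m → ℕ) → ℕ → ℝ} (hP : IsStochastic m P)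
    {x : ℕ → ℝ} (hx : inS x) (k : ℕ) :
    Summable (fun f : Fin m → ℕ => P f k * ∏ j, x (f j)) := by
  apply summable_of_sum_le (c := 1)
  · intro f
    exact mul_nonneg (hP.1 f k) (Finset.prod_nonneg fun j _ => hx.1 _)
  · intro u
    calc ∑ f ∈ u, P f k * ∏ j, x (f j)
        ≤ ∑ f ∈ u, ∏ j, x (f j) := by
          apply Finset.sum_le_sum
          intro f _
          have h1 : P f k ≤ 1 := le_hasSum (hP.2 f) k (fun j _ => hP.1 f j)
          nlinarith [Finset.prod_nonneg (fun j (_ : j ∈ Finset.univ) => hx.1 (f j)), hP.1 f k]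
      _ ≤ 1 := aux_sum_prod_le hx u

lemma aux_psoV_stdBasis (m : ℕ) (P : (Fin m → ℕ) → ℕ → ℝ) (j k : ℕ) :
    psoV m P (stdBasis j) k = P (fun _ => j) k := by
  unfold psoV
  rw [tsum_eq_single (fun _ => j)]
  · simp [stdBasis]
  · intro f hf
    have hex : ∃ t, f t ≠ j := by
      by_contra h; push_neg at h; exact hf (funext h)
    obtain ⟨t, ht⟩ := hex
    have h0 : stdBasis j (f t) = 0 := by simp [stdBasis, ht]
    rw [Finset.prod_eq_zero (Finset.mem_univ t) h0, mul_zero]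

theorem stmt11 (m : ℕ) (hm : 1 ≤ m) (P : (Fin m → ℕ) → ℕ → ℝ)
    (hP : IsStochastic m P) (hsur : SurjOnS m P)
    (hfix : ∀ i : ℕ, psoV m P (stdBasis i) = stdBasis i) :
    ∀ i : ℕ, ∀ x : ℕ → ℝ, inS x → (psoV m P x = stdBasis i ↔ x = stdBasis i) := by
  intro i x hx
  constructor
  · intro hV
    have key : ∀ a, a ≠ i → x a = 0 := by
      intro a ha
      by_contra h
      have hxa : 0 < x a := lt_of_le_of_ne (hx.1 a) (Ne.symm h)
      have hPa : P (fun _ => a) a = 1 := by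
        have h1 := congrFun (hfix a) a
        rw [aux_psoV_stdBasis] at h1
        simpa [stdBasis] using h1
      have hle : P (fun _ => a) a * ∏ _j : Fin m, x a ≤ psoV m P x a := by
        have := Summable.le_tsum (aux_summable hP hx a) (fun _ => a)
          (fun f _ => mul_nonneg (hP.1 f a) (Finset.prod_nonneg fun j _ => hx.1 _))
        simpa [psoV] using this
      have hz : psoV m P x a = 0 := by rw [hV]; simp [stdBasis, ha]
      have hpos : 0 < P (fun _ => a) a * ∏ _j : Fin m, x a := by
        rw [hPa, one_mul, Finset.prod_const]
        positivity
      linarith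
    have hxi : x i = 1 := by
      have h2 : HasSum (fun k => if k = i then x i else 0) (x i) := hasSum_ite_eq i (x i)
      have hxeq : x = fun k => if k = i then x i else 0 := by
        funext k
        by_cases hk : k = i
        · simp [hk]
        · simp [hk, key k hk]
      have h3 : HasSum (fun k => if k = i then x i else 0) 1 := hxeq ▸ hx.2
      exact h3.unique h2 |>.symm
    funext n
    by_cases hn : n = i
    · simp [stdBasis, hn, hxi]
    · simp [stdBasis, hn, key n hn]
  · intro h; rw [h, hfix]
end

section
/- Let V̄ be a surjective m-ordered PSO on S with V̄(e_i) = e_i for all i, and define V by (V(x))_1 = (V̄(x))_1 + (V̄(x))_2 and (V(x))_k = (V̄(x))_{k+1} for k > 1. Then V is an m-ordered PSO that is surjective on S but not orthogonal preserving (indeed V(e_1) = V(e_2) = e_1). -/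
lemma summable_prod_pi (m : ℕ) (x : ℕ → ℝ) (hx : ∀ n, 0 ≤ x n) (hs : Summable x) :
    Summable (fun i : Fin m → ℕ => ∏ j, x (i j)) := by
  induction m with
  | zero =>
      exact (hasSum_single (β := Fin 0 → ℕ) (fun i => i.elim0)
        (fun b hb => absurd (funext fun i => i.elim0) hb)).summable
  | succ m ih =>
      have h2 : Summable (fun p : ℕ × (Fin m → ℕ) => x p.1 * ∏ j, x (p.2 j)) :=
        Summable.mul_of_nonneg (f := x) (g := fun i : Fin m → ℕ => ∏ j, x (i j)) hs ih
          (fun n => hx n) (fun i => Finset.prod_nonneg fun j _ => hx _)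
      rw [← (Fin.consEquiv (fun _ : Fin (m + 1) => ℕ)).summable_iff]
      convert h2 using 1
      funext p
      simp [Fin.consEquiv, Fin.prod_univ_succ]

lemma summable_term (m : ℕ) (P : (Fin m → ℕ) → ℕ → ℝ) (hP : IsStochastic m P)
    (x : ℕ → ℝ) (hx : inS x) (k : ℕ) :
    Summable (fun i : Fin m → ℕ => P i k * ∏ j, x (i j)) := by
  have hprod := summable_prod_pi m x hx.1 hx.2.summable
  refine Summable.of_nonneg_of_le
    (fun i => mul_nonneg (hP.1 i k) (Finset.prod_nonneg fun j _ => hx.1 _))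
    (fun i => ?_) hprod
  have hle : P i k ≤ 1 := le_hasSum (hP.2 i) k (fun j _ => hP.1 i j)
  have hpn : 0 ≤ ∏ j, x (i j) := Finset.prod_nonneg fun j _ => hx.1 _
  calc P i k * ∏ j, x (i j) ≤ 1 * ∏ j, x (i j) := mul_le_mul_of_nonneg_right hle hpn
    _ = ∏ j, x (i j) := one_mul _

lemma psoV_stdBasis (m : ℕ) (R : (Fin m → ℕ) → ℕ → ℝ) (r : ℕ) :
    psoV m R (stdBasis r) = fun k => R (fun _ => r) k := by
  funext k
  unfold psoV
  have h : (fun i : Fin m → ℕ => R i k * ∏ j, stdBasis r (i j)) =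
      fun i => if i = (fun _ => r) then R (fun _ => r) k else 0 := by
    funext i
    by_cases h : i = fun _ => r
    · subst h; simp [stdBasis]
    · obtain ⟨j, hj⟩ := Function.ne_iff.mp h
      rw [if_neg h]
      have : stdBasis r (i j) = 0 := by simp [stdBasis, hj]
      rw [Finset.prod_eq_zero (Finset.mem_univ j) this, mul_zero]
  rw [h, tsum_ite_eq]

theorem stmt12 (m : ℕ) (hm : 1 ≤ m) (P : (Fin m → ℕ) → ℕ → ℝ)
    (hP : IsStochastic m P) (hsur : SurjOnS m P)
    (hfix : ∀ i : ℕ, psoV m P (stdBasis i) = stdBasis i)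
    (Q : (Fin m → ℕ) → ℕ → ℝ)
    (hQ : ∀ (i : Fin m → ℕ) (k : ℕ),
      Q i k = if k = 0 then P i 0 + P i 1 else P i (k + 1)) :
    IsStochastic m Q ∧ SurjOnS m Q ∧
    psoV m Q (stdBasis 0) = stdBasis 0 ∧ psoV m Q (stdBasis 1) = stdBasis 0 ∧
    ¬ IsOP m Q := by
  -- values of P at constant tuples
  have hPconst : ∀ r k : ℕ, P (fun _ => r) k = stdBasis r k := by
    intro r k
    have := congrFun (hfix r) k
    rwa [psoV_stdBasis] at this
  -- Q is stochastic
  have hQpos : ∀ i k, 0 ≤ Q i k := by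
    intro i k
    rw [hQ]
    split
    · exact add_nonneg (hP.1 i 0) (hP.1 i 1)
    · exact hP.1 i _
  have hQsum : ∀ i, HasSum (fun k => Q i k) 1 := by
    intro i
    have h2 : HasSum (fun k => P i (k + 2)) (1 - (P i 0 + P i 1)) := by
      refine (hasSum_nat_add_iff 2).mpr ?_
      have : (1 : ℝ) - (P i 0 + P i 1) + ∑ j ∈ Finset.range 2, P i j = 1 := by
        rw [Finset.sum_range_succ, Finset.sum_range_one]; ring
      rw [this]; exact hP.2 i
    have h1 : HasSum (fun k => Q i (k + 1)) (1 - (P i 0 + P i 1)) := by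
      have he : (fun k => Q i (k + 1)) = fun k => P i (k + 2) := by
        funext k; rw [hQ]; simp
      rw [he]; exact h2
    have := (hasSum_nat_add_iff 1).mp h1
    simpa [hQ i 0] using this
  have hQstoch : IsStochastic m Q := ⟨hQpos, hQsum⟩
  -- psoV Q in terms of psoV P on S
  have hQP0 : ∀ x : ℕ → ℝ, inS x → psoV m Q x 0 = psoV m P x 0 + psoV m P x 1 := by
    intro x hx
    unfold psoV
    have h : (fun i : Fin m → ℕ => Q i 0 * ∏ j, x (i j)) =
        fun i => P i 0 * ∏ j, x (i j) + P i 1 * ∏ j, x (i j) := by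
      funext i; rw [hQ]; simp [add_mul]
    rw [h, Summable.tsum_add (summable_term m P hP x hx 0) (summable_term m P hP x hx 1)]
  have hQPk : ∀ (x : ℕ → ℝ) (k : ℕ), psoV m Q x (k + 1) = psoV m P x (k + 2) := by
    intro x k
    unfold psoV
    congr 1; funext i; rw [hQ]; simp
  -- stdBasis membership in S
  have hstdS : ∀ r, inS (stdBasis r) := by
    intro r
    constructor
    · intro n; unfold stdBasis; split <;> norm_num
    · exact hasSum_ite_eq r 1
  -- values on stdBasis 0 and 1
  have hval : ∀ r ∈ ({0, 1} : Set ℕ), psoV m Q (stdBasis r) = stdBasis 0 := by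
    intro r hr
    rw [psoV_stdBasis]
    funext k
    rw [hQ, hPconst, hPconst, hPconst]
    rcases hr with hr | hr <;> subst hr <;>
      · rcases Nat.eq_zero_or_pos k with hk | hk
        · subst hk; simp [stdBasis]
        · have hk0 : k ≠ 0 := Nat.pos_iff_ne_zero.mp hk
          simp [stdBasis, hk0] <;> omega
  have hv0 : psoV m Q (stdBasis 0) = stdBasis 0 := hval 0 (by simp)
  have hv1 : psoV m Q (stdBasis 1) = stdBasis 0 := hval 1 (by simp)
  refine ⟨hQstoch, ?_, hv0, hv1, ?_⟩
  · -- surjectivity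
    intro y hy
    set z : ℕ → ℝ := fun n => if n = 1 then 0 else y (if n = 0 then 0 else n - 1) with hz
    have hzS : inS z := by
      constructor
      · intro n; rw [hz]; dsimp only; split
        · exact le_refl 0
        · exact hy.1 _
      · set g : ℕ → ℕ := fun k => if k = 0 then 0 else k + 1 with hg
        have hginj : Function.Injective g := by
          intro a b hab; rw [hg] at hab; dsimp only at hab
          split_ifs at hab <;> omega
        have hvanish : ∀ n ∉ Set.range g, z n = 0 := by
          intro n hn
          rcases Nat.eq_zero_or_pos n with h0 | h0
          · exfalso; exact hn ⟨0, by simp [hg, h0.symm]⟩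
          rcases Nat.lt_or_ge n 2 with h2 | h2
          · have : n = 1 := by omega
            simp [hz, this]
          · exfalso; refine hn ⟨n - 1, ?_⟩
            have hne : n - 1 ≠ 0 := by omega
            simp only [hg, if_neg hne]
            omega
        have hcomp : (fun k => z (g k)) = y := by
          funext k
          rcases Nat.eq_zero_or_pos k with h0 | h0
          · simp [hz, hg, h0]
          · have hk0 : k ≠ 0 := Nat.pos_iff_ne_zero.mp h0
            simp [hz, hg, hk0]
        have := (Function.Injective.hasSum_iff hginj hvanish).mp
          (by rw [show (z ∘ g) = y from hcomp]; exact hy.2)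
        exact this
    obtain ⟨x, hxS, hx⟩ := hsur z hzS
    refine ⟨x, hxS, ?_⟩
    funext k
    rcases Nat.eq_zero_or_pos k with h0 | h0
    · subst h0
      rw [hQP0 x hxS, hx]
      simp [hz]
    · obtain ⟨k', rfl⟩ : ∃ k', k = k' + 1 := ⟨k - 1, by omega⟩
      rw [hQPk x k', hx]
      simp [hz]
  · -- not orthogonal preserving
    intro hop
    have horth : Orth (stdBasis 0) (stdBasis 1) := by
      intro k
      unfold stdBasis
      rcases Nat.eq_zero_or_pos k with h0 | h0
      · subst h0; norm_num
      · have : k ≠ 0 := Nat.pos_iff_ne_zero.mp h0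
        simp [this]
    have := hop (stdBasis 0) (stdBasis 1) (hstdS 0) (hstdS 1) horth 0
    rw [hv0, hv1] at this
    simp [stdBasis] at this
end

section
/- Let m = 3 and define the hypermatrix P on ℕ by: P is symmetric in its first three indices, P_{i_1 i_2 k, k} = 1 if k ≥ max{i_1, i_2} and 0 if k < max{i_1,i_2}, and P_{i_1 i_2 i_3, k} = 0 if k ∉ {i_1,i_2,i_3}. Then the associated 3-ordered PSO V satisfies Σ_{k=1}^{n} (V(x))_k = (Σ_{k=1}^{n} x_k)^3 for every n ∈ ℕ and every x ∈ S; consequently V is surjective on S. -/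
theorem stmt19 (P : (Fin 3 → ℕ) → ℕ → ℝ)
    (hsym : HypSymm 3 P)
    (h1 : ∀ a b k : ℕ, a ≤ k → b ≤ k → P ![a, b, k] k = 1)
    (h2 : ∀ a b k : ℕ, (k < a ∨ k < b) → P ![a, b, k] k = 0)
    (h3 : ∀ (i : Fin 3 → ℕ) (k : ℕ), (∀ j, i j ≠ k) → P i k = 0) :
    IsStochastic 3 P ∧
    (∀ x : ℕ → ℝ, inS x → ∀ n : ℕ,
      ∑ k ∈ Finset.range n, psoV 3 P x k = (∑ k ∈ Finset.range n, x k) ^ 3) ∧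
    SurjOnS 3 P := by
  have heta : ∀ f : Fin 3 → ℕ, ![f 0, f 1, f 2] = f := by
    intro f; funext j; fin_cases j <;> rfl
  have hswap12 : ∀ a b c k : ℕ, P ![a, b, c] k = P ![a, c, b] k := by
    intro a b c k
    have h := hsym (Equiv.swap 1 2) ![a, b, c] k
    rw [← h]
    congr 1
    funext j
    fin_cases j <;> simp [Equiv.swap_apply_def]
  have hswap02 : ∀ a b c k : ℕ, P ![a, b, c] k = P ![c, b, a] k := by
    intro a b c k
    have h := hsym (Equiv.swap 0 2) ![a, b, c] k
    rw [← h]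
    congr 1
    funext j
    fin_cases j <;> simp [Equiv.swap_apply_def]
  have key3 : ∀ a b c k : ℕ, P ![a, b, c] k = if max a (max b c) = k then 1 else 0 := by
    intro a b c k
    by_cases hc : c = k
    · rw [hc]
      by_cases hle : a ≤ k ∧ b ≤ k
      · rw [h1 _ _ _ hle.1 hle.2, if_pos (by omega)]
      · rw [h2 _ _ _ (by omega), if_neg (by omega)]
    · by_cases hb : b = k
      · rw [hswap12, hb]
        by_cases hle : a ≤ k ∧ c ≤ k
        · rw [h1 _ _ _ hle.1 hle.2, if_pos (by omega)]
        · rw [h2 _ _ _ (by omega), if_neg (by omega)]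
      · by_cases ha : a = k
        · rw [hswap02, ha]
          by_cases hle : c ≤ k ∧ b ≤ k
          · rw [h1 _ _ _ hle.1 hle.2, if_pos (by omega)]
          · rw [h2 _ _ _ (by omega), if_neg (by omega)]
        · rw [h3 _ _ ?_, if_neg (by omega)]
          intro j
          fin_cases j
          · simpa using ha
          · simpa using hb
          · simpa using hc
  have hP : ∀ (i : Fin 3 → ℕ) (k : ℕ),
      P i k = if max (i 0) (max (i 1) (i 2)) = k then 1 else 0 := by
    intro i k
    have := key3 (i 0) (i 1) (i 2) k
    rwa [heta i] at this
  have hstoch : IsStochastic 3 P := by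
    constructor
    · intro i k; rw [hP]; split <;> norm_num
    · intro i
      have hfe : (fun k => P i k)
          = fun k => if k = max (i 0) (max (i 1) (i 2)) then 1 else 0 := by
        funext k; rw [hP]; exact if_congr eq_comm rfl rfl
      rw [hfe]
      exact hasSum_ite_eq _ _
  have key : ∀ x : ℕ → ℝ, inS x → ∀ n : ℕ,
      ∑ k ∈ Finset.range n, psoV 3 P x k = (∑ k ∈ Finset.range n, x k) ^ 3 := by
    intro x hx n
    have hx1 : Summable x := hx.2.summable
    have s2 : Summable (fun p : ℕ × ℕ => x p.1 * x p.2) :=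
      hx1.mul_of_nonneg hx1 (fun i => hx.1 i) (fun i => hx.1 i)
    have s3 : Summable (fun p : ℕ × ℕ × ℕ => x p.1 * (x p.2.1 * x p.2.2)) :=
      hx1.mul_of_nonneg s2 (fun i => hx.1 i) (fun p => mul_nonneg (hx.1 _) (hx.1 _))
    let e : (Fin 3 → ℕ) ≃ ℕ × ℕ × ℕ :=
      { toFun := fun i => (i 0, i 1, i 2)
        invFun := fun p => ![p.1, p.2.1, p.2.2]
        left_inv := fun i => heta i
        right_inv := fun p => rfl }
    have sprod : Summable (fun i : Fin 3 → ℕ => ∏ j, x (i j)) := by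
      have h := (e.summable_iff
        (f := fun p : ℕ × ℕ × ℕ => x p.1 * (x p.2.1 * x p.2.2))).mpr s3
      refine h.congr fun i => ?_
      simp [e, Fin.prod_univ_three, mul_assoc]
      rfl
    have prodnn : ∀ i : Fin 3 → ℕ, 0 ≤ ∏ j, x (i j) :=
      fun i => Finset.prod_nonneg fun j _ => hx.1 _
    have hsk : ∀ k, Summable (fun i : Fin 3 → ℕ => P i k * ∏ j, x (i j)) := by
      intro k
      have hnn : ∀ i : Fin 3 → ℕ, 0 ≤ P i k * ∏ j, x (i j) := by
        intro i
        refine mul_nonneg ?_ (prodnn i)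
        rw [hP]; split <;> norm_num
      have hle : ∀ i : Fin 3 → ℕ, P i k * ∏ j, x (i j) ≤ ∏ j, x (i j) := by
        intro i
        have h1' : P i k ≤ 1 := by rw [hP]; split <;> norm_num
        calc P i k * ∏ j, x (i j) ≤ 1 * ∏ j, x (i j) :=
              mul_le_mul_of_nonneg_right h1' (prodnn i)
          _ = ∏ j, x (i j) := one_mul _
      exact Summable.of_nonneg_of_le hnn hle sprod
    calc ∑ k ∈ Finset.range n, psoV 3 P x k
        = ∑ k ∈ Finset.range n, ∑' i : Fin 3 → ℕ, P i k * ∏ j, x (i j) := rfl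
      _ = ∑' i : Fin 3 → ℕ, ∑ k ∈ Finset.range n, P i k * ∏ j, x (i j) :=
          (Summable.tsum_finsetSum (fun k _ => hsk k)).symm
      _ = ∑' i : Fin 3 → ℕ,
            (if max (i 0) (max (i 1) (i 2)) ∈ Finset.range n then (1:ℝ) else 0)
              * ∏ j, x (i j) := by
          refine tsum_congr fun i => ?_
          rw [← Finset.sum_mul]
          congr 1
          simp only [hP]
          exact Finset.sum_ite_eq (Finset.range n) _ (fun _ => (1:ℝ))
      _ = ∑ i ∈ Fintype.piFinset (fun _ : Fin 3 => Finset.range n), ∏ j, x (i j) := by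
          rw [tsum_eq_sum (s := Fintype.piFinset fun _ : Fin 3 => Finset.range n) ?_]
          · refine Finset.sum_congr rfl fun i hi => ?_
            simp only [Fintype.mem_piFinset, Finset.mem_range] at hi
            have h0 := hi 0; have h1' := hi 1; have h2' := hi 2
            rw [if_pos (by simp only [Finset.mem_range]; omega), one_mul]
          · intro i hi
            simp only [Fintype.mem_piFinset, Finset.mem_range] at hi
            have hor : n ≤ i 0 ∨ n ≤ i 1 ∨ n ≤ i 2 := by
              by_contra hcon
              push_neg at hcon
              exact hi fun j => by fin_cases j
                <;> first | exact hcon.1 | exact hcon.2.1 | exact hcon.2.2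
            rw [if_neg (by simp only [Finset.mem_range]; omega), zero_mul]
      _ = (∑ k ∈ Finset.range n, x k) ^ 3 := by
          rw [← Finset.prod_univ_sum]
          simp
  refine ⟨hstoch, key, ?_⟩
  intro y hy
  set T : ℕ → ℝ := fun n => ∑ k ∈ Finset.range n, y k with hTdef
  have hT0 : ∀ n, 0 ≤ T n := fun n => Finset.sum_nonneg fun k _ => hy.1 k
  have hTsucc : ∀ n, T (n + 1) = T n + y n := fun n => Finset.sum_range_succ y n
  set f : ℕ → ℝ := fun n => T n ^ ((1:ℝ)/3) with hfdef
  have hf0 : f 0 = 0 := by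
    show T 0 ^ ((1:ℝ)/3) = 0
    have hT00 : T 0 = 0 := by simp [hTdef]
    rw [hT00, Real.zero_rpow (by norm_num)]
  set x : ℕ → ℝ := fun k => f (k + 1) - f k with hxdef
  have hxnn : ∀ k, 0 ≤ x k := by
    intro k
    have hle : T k ≤ T (k + 1) := by
      rw [hTsucc k]; linarith [hy.1 k]
    exact sub_nonneg.mpr (Real.rpow_le_rpow (hT0 k) hle (by norm_num))
  have hpartial : ∀ n, ∑ k ∈ Finset.range n, x k = f n := by
    intro n
    calc ∑ k ∈ Finset.range n, x k = ∑ k ∈ Finset.range n, (f (k + 1) - f k) := rfl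
      _ = f n - f 0 := Finset.sum_range_sub f n
      _ = f n := by rw [hf0, sub_zero]
  have hT1 : Filter.Tendsto T Filter.atTop (nhds 1) := hy.2.tendsto_sum_nat
  have hf1 : Filter.Tendsto f Filter.atTop (nhds 1) := by
    have h := hT1.rpow_const (p := (1:ℝ)/3) (Or.inr (by norm_num))
    simpa [hfdef] using h
  have hxsum : HasSum x 1 := by
    rw [hasSum_iff_tendsto_nat_of_nonneg hxnn]
    have hfx : (fun n => ∑ i ∈ Finset.range n, x i) = f := funext hpartial
    rw [hfx]
    exact hf1
  have hinSx : inS x := ⟨hxnn, hxsum⟩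
  refine ⟨x, hinSx, ?_⟩
  have hcube : ∀ n, (∑ k ∈ Finset.range n, x k) ^ 3 = T n := by
    intro n
    rw [hpartial n]
    show (T n ^ ((1:ℝ)/3)) ^ (3:ℕ) = T n
    rw [← Real.rpow_natCast (T n ^ ((1:ℝ)/3)) 3, ← Real.rpow_mul (hT0 n)]
    norm_num
  have hVT : ∀ n, ∑ k ∈ Finset.range n, psoV 3 P x k = T n :=
    fun n => (key x hinSx n).trans (hcube n)
  funext k
  have hA := hVT (k + 1)
  have hB := hVT k
  rw [Finset.sum_range_succ] at hA
  have hC : T (k + 1) = T k + y k := hTsucc k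
  linarith
end
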